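/- Let S be a Γ-semigroup, γ₀ ∈ Γ with S_{γ₀} completely simple, and let ε₀ be a primitive idempotent of S_{γ₀}. Then γ₀ε₀γ₀ is a primitive idempotent of the semigroup Σ' = Σ \ Γ. -/

import Mathlib

open FreeSemigroup

section GammaSemigroup

variable {S Γ : Type}

/-- One-step rewriting on words over S ⊕ Γ. -/
inductive GStep (m : S → Γ → S → S) (γ₀ : Γ) : List (S ⊕ Γ) → List (S ⊕ Γ) → Prop
  | gg (u v : List (S ⊕ Γ)) (γ₁ γ₂ : Γ) :
      GStep m γ₀ (u ++ Sum.inr γ₁ :: Sum.inr γ₂ :: v) (u ++ Sum.inr γ₁ :: v)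
  | xgy (u v : List (S ⊕ Γ)) (x : S) (γ : Γ) (y : S) :
      GStep m γ₀ (u ++ Sum.inl x :: Sum.inr γ :: Sum.inl y :: v) (u ++ Sum.inl (m x γ y) :: v)
  | xy (u v : List (S ⊕ Γ)) (x y : S) :
      GStep m γ₀ (u ++ Sum.inl x :: Sum.inl y :: v) (u ++ Sum.inl (m x γ₀ y) :: v)

/-- The defining relations on the free semigroup on S ⊕ Γ. -/
def GRel (m : S → Γ → S → S) (γ₀ : Γ) :
    FreeSemigroup (S ⊕ Γ) → FreeSemigroup (S ⊕ Γ) → Prop :=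
  fun a b =>
    (∃ γ₁ γ₂ : Γ, a = of (Sum.inr γ₁) * of (Sum.inr γ₂) ∧ b = of (Sum.inr γ₁)) ∨
    (∃ (x y : S) (γ : Γ), a = of (Sum.inl x) * of (Sum.inr γ) * of (Sum.inl y) ∧
      b = of (Sum.inl (m x γ y))) ∨
    (∃ x y : S, a = of (Sum.inl x) * of (Sum.inl y) ∧ b = of (Sum.inl (m x γ₀ y)))

/-- The congruence generated by the defining relations. -/
def GCon (m : S → Γ → S → S) (γ₀ : Γ) : Con (FreeSemigroup (S ⊕ Γ)) := conGen (GRel m γ₀)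

/-- The universal semigroup Σ of the Γ-semigroup S. -/
abbrev USem (m : S → Γ → S → S) (γ₀ : Γ) := (GCon m γ₀).Quotient

/-- The canonical map μ : S → Σ. -/
def gmu (m : S → Γ → S → S) (γ₀ : Γ) (x : S) : USem m γ₀ :=
  ((of (Sum.inl x) : FreeSemigroup (S ⊕ Γ)) : (GCon m γ₀).Quotient)

/-- The canonical map Γ → Σ. -/
def giota (m : S → Γ → S → S) (γ₀ : Γ) (γ : Γ) : USem m γ₀ :=
  ((of (Sum.inr γ) : FreeSemigroup (S ⊕ Γ)) : (GCon m γ₀).Quotient)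

/-- Principal left ideal of an element of a semigroup. -/
def pLeft {T : Type} [Semigroup T] (a : T) : Set T := {w | ∃ t : T, w = t * a} ∪ {a}

/-- Principal right ideal of an element of a semigroup. -/
def pRight {T : Type} [Semigroup T] (a : T) : Set T := {w | ∃ t : T, w = a * t} ∪ {a}

/-- Principal left ideal in the Γ-semigroup: SΓx ∪ {x}. -/
def pLeftG (m : S → Γ → S → S) (x : S) : Set S := {y | ∃ (s : S) (γ : Γ), y = m s γ x} ∪ {x}

/-- Principal right ideal in the Γ-semigroup: xΓS ∪ {x}. -/
def pRightG (m : S → Γ → S → S) (x : S) : Set S := {y | ∃ (γ : Γ) (s : S), y = m x γ s} ∪ {x}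

/-- Green's H relation on the Γ-semigroup. -/
def HrelG (m : S → Γ → S → S) (a b : S) : Prop := pLeftG m a = pLeftG m b ∧ pRightG m a = pRightG m b

/-- S_δ is a simple semigroup: its only two-sided ideal is S itself. -/
def SimpleAt (m : S → Γ → S → S) (δ : Γ) : Prop :=
  ∀ J : Set S, J.Nonempty → (∀ t : S, ∀ j ∈ J, m t δ j ∈ J ∧ m j δ t ∈ J) → J = Set.univ

/-- e is an idempotent of S_δ. -/
def IdemAt (m : S → Γ → S → S) (δ : Γ) (e : S) : Prop := m e δ e = e

/-- e is a primitive idempotent of S_δ. -/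
def PrimAt (m : S → Γ → S → S) (δ : Γ) (e : S) : Prop :=
  IdemAt m δ e ∧ ∀ f, IdemAt m δ f → m e δ f = f → m f δ e = f → f = e

/-- S_δ is completely simple. -/
def CSimpleAt (m : S → Γ → S → S) (δ : Γ) : Prop := SimpleAt m δ ∧ ∃ e, PrimAt m δ e

/-- S_δ has no zero element. -/
def NoZeroAt (m : S → Γ → S → S) (δ : Γ) : Prop := ¬ ∃ z : S, ∀ t : S, m z δ t = z ∧ m t δ z = z

/-- L is a left ideal of S_δ. -/
def LIdealAt (m : S → Γ → S → S) (δ : Γ) (L : Set S) : Prop :=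
  L.Nonempty ∧ ∀ t : S, ∀ l ∈ L, m t δ l ∈ L

/-- L is a minimal left ideal of S_δ. -/
def MinLIdealAt (m : S → Γ → S → S) (δ : Γ) (L : Set S) : Prop :=
  LIdealAt m δ L ∧ ∀ L' ⊆ L, LIdealAt m δ L' → L' = L

/-- S_δ is a group. -/
def GroupAt (m : S → Γ → S → S) (δ : Γ) : Prop :=
  ∃ e : S, (∀ a, m e δ a = a ∧ m a δ e = a) ∧ ∀ a, ∃ b, m a δ b = e ∧ m b δ a = e

/-- G is a subgroup (a sub-semigroup that is a group) of the semigroup T. -/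
def IsSubgroupOf {T : Type} [Semigroup T] (G : Set T) : Prop :=
  (∀ a ∈ G, ∀ b ∈ G, a * b ∈ G) ∧
  ∃ e ∈ G, (∀ g ∈ G, e * g = g ∧ g * e = g) ∧ ∀ g ∈ G, ∃ h ∈ G, g * h = e ∧ h * g = e

/-- The set Σ' = Σ \ Γ. -/
def USem' (m : S → Γ → S → S) (γ₀ : Γ) : Set (USem m γ₀) := {w | ¬ ∃ γ : Γ, w = giota m γ₀ γ}

end GammaSemigroup


section NormalForm

variable {S Γ : Type}

/-- Normal forms: either a pure Γ letter, or (optional left Γ) S (optional right Γ). -/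
abbrev NF (S Γ : Type) := Γ ⊕ (Option Γ × S × Option Γ)

def nfMul (m : S → Γ → S → S) (γ₀ : Γ) : NF S Γ → NF S Γ → NF S Γ
  | Sum.inl γ, Sum.inl _ => Sum.inl γ
  | Sum.inl γ, Sum.inr (_, x, b) => Sum.inr (some γ, x, b)
  | Sum.inr (a, x, b), Sum.inl γ => Sum.inr (a, x, some (b.getD γ))
  | Sum.inr (a, x, b), Sum.inr (c, y, d) => Sum.inr (a, m x (b.getD (c.getD γ₀)) y, d)

theorem nfMul_assoc (m : S → Γ → S → S) (γ₀ : Γ)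
    (assoc : ∀ (a b c : S) (α β : Γ), m (m a α b) β c = m a α (m b β c)) :
    ∀ a b c : NF S Γ, nfMul m γ₀ (nfMul m γ₀ a b) c = nfMul m γ₀ a (nfMul m γ₀ b c) := by
  rintro (γ₁ | ⟨a₁, x, a₂⟩) (γ₂ | ⟨b₁, y, b₂⟩) (γ₃ | ⟨c₁, z, c₂⟩) <;>
    simp [nfMul, assoc]

def nfLetter : S ⊕ Γ → NF S Γ
  | Sum.inl x => Sum.inr (none, x, none)
  | Sum.inr γ => Sum.inl γ

/-- The map from the free semigroup to normal forms. -/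
def nfPhi (m : S → Γ → S → S) (γ₀ : Γ) : FreeSemigroup (S ⊕ Γ) → NF S Γ :=
  fun w => w.tail.foldl (fun n l => nfMul m γ₀ n (nfLetter l)) (nfLetter w.head)

theorem nfPhi_of (m : S → Γ → S → S) (γ₀ : Γ) (l : S ⊕ Γ) :
    nfPhi m γ₀ (of l) = nfLetter l := rfl

theorem nfPhi_mul (m : S → Γ → S → S) (γ₀ : Γ)
    (assoc : ∀ (a b c : S) (α β : Γ), m (m a α b) β c = m a α (m b β c))
    (u v : FreeSemigroup (S ⊕ Γ)) :
    nfPhi m γ₀ (u * v) = nfMul m γ₀ (nfPhi m γ₀ u) (nfPhi m γ₀ v) := by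
  obtain ⟨h₁, t₁⟩ := u
  obtain ⟨h₂, t₂⟩ := v
  have key : ∀ (t : List (S ⊕ Γ)) (n k : NF S Γ),
      List.foldl (fun n l => nfMul m γ₀ n (nfLetter l)) (nfMul m γ₀ n k) t =
        nfMul m γ₀ n (List.foldl (fun n l => nfMul m γ₀ n (nfLetter l)) k t) := by
    intro t
    induction t with
    | nil => intro n k; rfl
    | cons hd tl ih =>
        intro n k
        show List.foldl _ (nfMul m γ₀ (nfMul m γ₀ n k) (nfLetter hd)) tl = _
        rw [nfMul_assoc m γ₀ assoc, ih]
        rfl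
  show List.foldl _ _ (t₁ ++ h₂ :: t₂) = _
  rw [List.foldl_append]
  exact key t₂ _ (nfLetter h₂)

theorem nfPhi_congr (m : S → Γ → S → S) (γ₀ : Γ)
    (assoc : ∀ (a b c : S) (α β : Γ), m (m a α b) β c = m a α (m b β c))
    {a b : FreeSemigroup (S ⊕ Γ)} (h : GCon m γ₀ a b) :
    nfPhi m γ₀ a = nfPhi m γ₀ b := by
  have : GCon m γ₀ ≤ Con.mk ⟨fun a b => nfPhi m γ₀ a = nfPhi m γ₀ b,
      ⟨fun _ => rfl, Eq.symm, Eq.trans⟩⟩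
      (fun h₁ h₂ => by
        simp only [nfPhi_mul m γ₀ assoc]; rw [h₁, h₂]) := by
    apply Con.conGen_le.mpr
    rintro a b (⟨γ₁, γ₂, rfl, rfl⟩ | ⟨x, y, γ, rfl, rfl⟩ | ⟨x, y, rfl, rfl⟩) <;>
      show nfPhi m γ₀ _ = nfPhi m γ₀ _ <;>
      simp [nfPhi_mul m γ₀ assoc, nfPhi_of, nfLetter, nfMul]
  exact this h

/-- The induced map Σ → NF. -/
def nfBar (m : S → Γ → S → S) (γ₀ : Γ)
    (assoc : ∀ (a b c : S) (α β : Γ), m (m a α b) β c = m a α (m b β c)) :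
    USem m γ₀ → NF S Γ :=
  fun u => Con.liftOn u (nfPhi m γ₀) (fun _ _ h => nfPhi_congr m γ₀ assoc h)

theorem nfBar_coe (m : S → Γ → S → S) (γ₀ : Γ)
    (assoc : ∀ (a b c : S) (α β : Γ), m (m a α b) β c = m a α (m b β c))
    (w : FreeSemigroup (S ⊕ Γ)) :
    nfBar m γ₀ assoc (w : USem m γ₀) = nfPhi m γ₀ w := rfl

theorem nfBar_mul (m : S → Γ → S → S) (γ₀ : Γ)
    (assoc : ∀ (a b c : S) (α β : Γ), m (m a α b) β c = m a α (m b β c))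
    (u v : USem m γ₀) :
    nfBar m γ₀ assoc (u * v) = nfMul m γ₀ (nfBar m γ₀ assoc u) (nfBar m γ₀ assoc v) := by
  induction u using Con.induction_on with
  | H a =>
    induction v using Con.induction_on with
    | H b =>
      show nfBar m γ₀ assoc ((a * b : FreeSemigroup (S ⊕ Γ)) : USem m γ₀) = _
      rw [nfBar_coe, nfPhi_mul m γ₀ assoc]; rfl

/-- Basic relations in Σ. -/
theorem grel1 (m : S → Γ → S → S) (γ₀ : Γ) (γ₁ γ₂ : Γ) :
    giota m γ₀ γ₁ * giota m γ₀ γ₂ = giota m γ₀ γ₁ := by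
  have h : giota m γ₀ γ₁ * giota m γ₀ γ₂ =
      ((of (Sum.inr γ₁) * of (Sum.inr γ₂) : FreeSemigroup (S ⊕ Γ)) : (GCon m γ₀).Quotient) := by
    rw [Con.coe_mul]; rfl
  rw [h]
  exact (Con.eq _).mpr (ConGen.Rel.of _ _ (Or.inl ⟨γ₁, γ₂, rfl, rfl⟩))

theorem grel2 (m : S → Γ → S → S) (γ₀ : Γ) (x y : S) (γ : Γ) :
    gmu m γ₀ x * giota m γ₀ γ * gmu m γ₀ y = gmu m γ₀ (m x γ y) := by
  have h : gmu m γ₀ x * giota m γ₀ γ * gmu m γ₀ y =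
      ((of (Sum.inl x) * of (Sum.inr γ) * of (Sum.inl y) : FreeSemigroup (S ⊕ Γ)) :
        (GCon m γ₀).Quotient) := by
    rw [Con.coe_mul, Con.coe_mul]; rfl
  rw [h]
  exact (Con.eq _).mpr (ConGen.Rel.of _ _ (Or.inr (Or.inl ⟨x, y, γ, rfl, rfl⟩)))

theorem grel3 (m : S → Γ → S → S) (γ₀ : Γ) (x y : S) :
    gmu m γ₀ x * gmu m γ₀ y = gmu m γ₀ (m x γ₀ y) := by
  have h : gmu m γ₀ x * gmu m γ₀ y =
      ((of (Sum.inl x) * of (Sum.inl y) : FreeSemigroup (S ⊕ Γ)) : (GCon m γ₀).Quotient) := by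
    rw [Con.coe_mul]; rfl
  rw [h]
  exact (Con.eq _).mpr (ConGen.Rel.of _ _ (Or.inr (Or.inr ⟨x, y, rfl, rfl⟩)))

theorem sg1' (m : S → Γ → S → S) (γ₀ : Γ) (γ γ' : Γ) (z : USem m γ₀) :
    giota m γ₀ γ * (giota m γ₀ γ' * z) = giota m γ₀ γ * z := by
  rw [← mul_assoc, grel1]

theorem sg2 (m : S → Γ → S → S) (γ₀ : Γ) (x y : S) (γ : Γ) :
    gmu m γ₀ x * (giota m γ₀ γ * gmu m γ₀ y) = gmu m γ₀ (m x γ y) := by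
  rw [← mul_assoc, grel2]

theorem sg2' (m : S → Γ → S → S) (γ₀ : Γ) (x y : S) (γ : Γ) (z : USem m γ₀) :
    gmu m γ₀ x * (giota m γ₀ γ * (gmu m γ₀ y * z)) = gmu m γ₀ (m x γ y) * z := by
  rw [← mul_assoc, ← mul_assoc, grel2]

theorem wg1 (m : S → Γ → S → S) (γ₀ : Γ) (γ γ' : Γ) :
    ((giota m γ₀ γ : WithOne (USem m γ₀)) * (giota m γ₀ γ' : WithOne (USem m γ₀))) =
      (giota m γ₀ γ : WithOne (USem m γ₀)) := by
  rw [← WithOne.coe_mul, grel1]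

theorem wg1' (m : S → Γ → S → S) (γ₀ : Γ) (γ γ' : Γ) (z : WithOne (USem m γ₀)) :
    ((giota m γ₀ γ : WithOne (USem m γ₀)) * ((giota m γ₀ γ' : WithOne (USem m γ₀)) * z)) =
      (giota m γ₀ γ : WithOne (USem m γ₀)) * z := by
  rw [← mul_assoc, wg1]

theorem wg3 (m : S → Γ → S → S) (γ₀ : Γ) (x y : S) :
    ((gmu m γ₀ x : WithOne (USem m γ₀)) * (gmu m γ₀ y : WithOne (USem m γ₀))) =
      (gmu m γ₀ (m x γ₀ y) : WithOne (USem m γ₀)) := by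
  rw [← WithOne.coe_mul, grel3]

theorem wg3' (m : S → Γ → S → S) (γ₀ : Γ) (x y : S) (z : WithOne (USem m γ₀)) :
    ((gmu m γ₀ x : WithOne (USem m γ₀)) * ((gmu m γ₀ y : WithOne (USem m γ₀)) * z)) =
      (gmu m γ₀ (m x γ₀ y) : WithOne (USem m γ₀)) * z := by
  rw [← mul_assoc, wg3]

theorem wg2 (m : S → Γ → S → S) (γ₀ : Γ) (x y : S) (γ : Γ) :
    ((gmu m γ₀ x : WithOne (USem m γ₀)) *
      ((giota m γ₀ γ : WithOne (USem m γ₀)) * (gmu m γ₀ y : WithOne (USem m γ₀)))) =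
      (gmu m γ₀ (m x γ y) : WithOne (USem m γ₀)) := by
  rw [← mul_assoc, ← WithOne.coe_mul, ← WithOne.coe_mul, grel2]

theorem wg2' (m : S → Γ → S → S) (γ₀ : Γ) (x y : S) (γ : Γ) (z : WithOne (USem m γ₀)) :
    ((gmu m γ₀ x : WithOne (USem m γ₀)) *
      ((giota m γ₀ γ : WithOne (USem m γ₀)) * ((gmu m γ₀ y : WithOne (USem m γ₀)) * z))) =
      (gmu m γ₀ (m x γ y) : WithOne (USem m γ₀)) * z := by
  rw [← mul_assoc, ← mul_assoc, ← WithOne.coe_mul, ← WithOne.coe_mul, grel2]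

/-- Interpretation of a normal form back in WithOne Σ. -/
def ocoe (m : S → Γ → S → S) (γ₀ : Γ) (o : Option Γ) : WithOne (USem m γ₀) :=
  o.elim 1 (fun γ => (giota m γ₀ γ : WithOne (USem m γ₀)))

def nfPsi (m : S → Γ → S → S) (γ₀ : Γ) : NF S Γ → WithOne (USem m γ₀)
  | Sum.inl γ => (giota m γ₀ γ : WithOne (USem m γ₀))
  | Sum.inr (a, x, b) => ocoe m γ₀ a * (gmu m γ₀ x : WithOne (USem m γ₀)) * ocoe m γ₀ b

theorem nfPsi_mul (m : S → Γ → S → S) (γ₀ : Γ) (n₁ n₂ : NF S Γ) :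
    nfPsi m γ₀ (nfMul m γ₀ n₁ n₂) = nfPsi m γ₀ n₁ * nfPsi m γ₀ n₂ := by
  rcases n₁ with γ | ⟨a, x, b⟩ <;> rcases n₂ with γ' | ⟨c, y, d⟩ <;>
    [skip; rcases c with _ | α; rcases b with _ | β;
     (rcases b with _ | β <;> rcases c with _ | γ'')] <;>
  simp [nfPsi, nfMul, ocoe, mul_assoc, wg1, wg1', wg2, wg2', wg3, wg3']

theorem nfPsi_nfBar (m : S → Γ → S → S) (γ₀ : Γ)
    (assoc : ∀ (a b c : S) (α β : Γ), m (m a α b) β c = m a α (m b β c))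
    (u : USem m γ₀) :
    (u : WithOne (USem m γ₀)) = nfPsi m γ₀ (nfBar m γ₀ assoc u) := by
  induction u using Con.induction_on with
  | H w =>
    induction w using FreeSemigroup.recOnMul with
    | ih1 l =>
      rcases l with x | γ <;>
        simp [nfBar_coe, nfPhi_of, nfLetter, nfPsi, ocoe, gmu, giota]
    | ih2 u v hu hv =>
      rw [Con.coe_mul, WithOne.coe_mul, hu, hv, ← nfPsi_mul, ← nfBar_mul]

end NormalForm

theorem stmt (S Γ : Type) [Nonempty S] [Nonempty Γ] (m : S → Γ → S → S)
    (assoc : ∀ (a b c : S) (α β : Γ), m (m a α b) β c = m a α (m b β c)) (γ₀ : Γ) (hcs : CSimpleAt m γ₀) (ε₀ : S) (hprim : PrimAt m γ₀ ε₀) :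
    giota m γ₀ γ₀ * gmu m γ₀ ε₀ * giota m γ₀ γ₀ ∈ USem' m γ₀ ∧
    (giota m γ₀ γ₀ * gmu m γ₀ ε₀ * giota m γ₀ γ₀) * (giota m γ₀ γ₀ * gmu m γ₀ ε₀ * giota m γ₀ γ₀) =
      giota m γ₀ γ₀ * gmu m γ₀ ε₀ * giota m γ₀ γ₀ ∧
    ∀ f ∈ USem' m γ₀, f * f = f →
      (giota m γ₀ γ₀ * gmu m γ₀ ε₀ * giota m γ₀ γ₀) * f = f →
      f * (giota m γ₀ γ₀ * gmu m γ₀ ε₀ * giota m γ₀ γ₀) = f →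
      f = giota m γ₀ γ₀ * gmu m γ₀ ε₀ * giota m γ₀ γ₀ := by
  classical
  have hidem : m ε₀ γ₀ ε₀ = ε₀ := hprim.1
  have hbarε : nfBar m γ₀ assoc (giota m γ₀ γ₀ * gmu m γ₀ ε₀ * giota m γ₀ γ₀) =
      Sum.inr (some γ₀, ε₀, some γ₀) := by
    rw [nfBar_mul, nfBar_mul]
    show nfMul m γ₀ (nfMul m γ₀ (nfPhi m γ₀ _) (nfPhi m γ₀ _)) (nfPhi m γ₀ _) = _
    simp [nfPhi_of, nfLetter, nfMul]
  refine ⟨?_, ?_, ?_⟩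
  · rintro ⟨γ, hγ⟩
    have := congrArg (nfBar m γ₀ assoc) hγ
    rw [hbarε] at this
    exact absurd this (by simp [nfBar_coe, giota, nfPhi_of, nfLetter])
  · simp only [mul_assoc]
    rw [sg1', sg2', hidem]
  · intro f hf hff hef hfe
    obtain ⟨a, x, b, hfx⟩ : ∃ a x b, nfBar m γ₀ assoc f = Sum.inr (a, x, b) := by
      rcases h : nfBar m γ₀ assoc f with γ | ⟨a, x, b⟩
      · exfalso
        apply hf
        refine ⟨γ, ?_⟩
        have := nfPsi_nfBar m γ₀ assoc f
        rw [h] at this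
        exact WithOne.coe_inj.mp this
      · exact ⟨a, x, b, rfl⟩
    have hEf := congrArg (nfBar m γ₀ assoc) hef
    rw [nfBar_mul, hbarε, hfx] at hEf
    simp only [nfMul, Option.getD_some] at hEf
    obtain ⟨ha, hx1, -⟩ : some γ₀ = a ∧ m ε₀ γ₀ x = x ∧ b = b := by
      simpa using hEf
    have hFe := congrArg (nfBar m γ₀ assoc) hfe
    rw [nfBar_mul, hbarε, hfx] at hFe
    simp only [nfMul, Option.getD_some] at hFe
    obtain ⟨-, hx2, hb⟩ : a = a ∧ m x (b.getD γ₀) ε₀ = x ∧ some γ₀ = b := by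
      simpa using hFe
    rw [← hb, Option.getD_some] at hx2
    have hFf := congrArg (nfBar m γ₀ assoc) hff
    rw [nfBar_mul, hfx] at hFf
    simp only [nfMul] at hFf
    obtain ⟨-, hx3, -⟩ : a = a ∧ m x ((b.getD (a.getD γ₀))) x = x ∧ b = b := by
      simpa using hFf
    rw [← hb, Option.getD_some] at hx3
    have hxε : x = ε₀ := hprim.2 x hx3 hx1 hx2
    have h1 := nfPsi_nfBar m γ₀ assoc f
    rw [hfx, hxε, ← ha, ← hb] at h1
    have h2 : nfPsi m γ₀ (Sum.inr (some γ₀, ε₀, some γ₀)) =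
        ((giota m γ₀ γ₀ * gmu m γ₀ ε₀ * giota m γ₀ γ₀ : USem m γ₀) :
          WithOne (USem m γ₀)) := by
      simp [nfPsi, ocoe, ← WithOne.coe_mul]
    rw [h2] at h1
    exact WithOne.coe_inj.mp h1
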